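/- Variance bounds for the whitened cross-covariance estimator (claims proved in Appendix A.5, 'Bounding σ²_cr'). Let (Ω, ℙ) be a probability space and let x, y : Ω → ℝᵈ be measurable maps such that ω ↦ x(ω)x(ω)ᵀ, ω ↦ x(ω)y(ω)ᵀ and ω ↦ y(ω)y(ω)ᵀ are Bochner integrable. Assume Σ_cov := 𝔼[x xᵀ] is positive definite, set Σ_cr := 𝔼[x yᵀ] and Σ_next := 𝔼[y yᵀ], and suppose: (i) ‖Σ_cov^{−1/2}·x(ω)‖ ≤ ρ_s and ‖Σ_cov^{−1/2}·y(ω)‖ ≤ ρ_{s′} for ℙ-almost every ω, and (ii) Σ_next ⪯ C·Σ_cov for some C ≥ 0. Define the centered matrix-valued random variable S(ω) := Σ_cov^{−1/2}·( x(ω)y(ω)ᵀ − Σ_cr )·Σ_cov^{−1/2}. Then ‖𝔼[S·Sᵀ]‖ ≤ ρ_{s′}² and ‖𝔼[Sᵀ·S]‖ ≤ ρ_s²·C. -/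

import Mathlib

open scoped Matrix.Norms.L2Operator
open Matrix MeasureTheory

namespace Matrix.PosSemidef
open scoped ComplexOrder

/-- The square root of a positive semidefinite matrix, as defined in Mathlib (Dec 2024). -/
noncomputable def sqrt {n 𝕜 : Type*} [Fintype n] [RCLike 𝕜] [DecidableEq n] {A : Matrix n n 𝕜}
    (hA : A.PosSemidef) : Matrix n n 𝕜 :=
  hA.1.eigenvectorUnitary.1 * diagonal (((↑) : ℝ → 𝕜) ∘ (√·) ∘ hA.1.eigenvalues) *
    (star hA.1.eigenvectorUnitary : Matrix n n 𝕜)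

lemma posSemidef_sqrt {n 𝕜 : Type*} [Fintype n] [RCLike 𝕜] [DecidableEq n] {A : Matrix n n 𝕜}
    (hA : A.PosSemidef) : hA.sqrt.PosSemidef := by
  have hD : (diagonal (((↑) : ℝ → 𝕜) ∘ (√·) ∘ hA.1.eigenvalues)).PosSemidef :=
    posSemidef_diagonal_iff.mpr fun i => by
      simp only [Function.comp_apply]; exact RCLike.ofReal_nonneg.mpr (Real.sqrt_nonneg _)
  have := hD.mul_mul_conjTranspose_same (hA.1.eigenvectorUnitary : Matrix n n 𝕜)
  rw [sqrt, star_eq_conjTranspose]; exact this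

lemma sqrt_mul_self {n 𝕜 : Type*} [Fintype n] [RCLike 𝕜] [DecidableEq n] {A : Matrix n n 𝕜}
    (hA : A.PosSemidef) : hA.sqrt * hA.sqrt = A := by
  have hU := Unitary.coe_star_mul_self hA.1.eigenvectorUnitary
  rw [sqrt]
  conv_rhs => rw [hA.1.spectral_theorem, Unitary.conjStarAlgAut_apply]
  generalize (hA.1.eigenvectorUnitary : Matrix n n 𝕜) = U at hU ⊢
  rw [show ∀ D E : Matrix n n 𝕜, U * D * star U * (U * E * star U)
      = U * (D * (star U * U) * E) * star U from fun D E => by simp only [Matrix.mul_assoc],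
    hU, Matrix.mul_one, diagonal_mul_diagonal]
  have key : ∀ i, (((↑) : ℝ → 𝕜) ∘ (√·) ∘ hA.1.eigenvalues) i *
      (((↑) : ℝ → 𝕜) ∘ (√·) ∘ hA.1.eigenvalues) i = (RCLike.ofReal ∘ hA.1.eigenvalues) i :=
    fun i => by
      simp only [Function.comp_apply]
      rw [← RCLike.ofReal_mul, Real.mul_self_sqrt (hA.eigenvalues_nonneg i)]
  simp only [key]

end Matrix.PosSemidef

namespace Stmt19

variable {d : ℕ} {Ω : Type*} [MeasurableSpace Ω] {μ : Measure Ω}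

lemma conjT_eq (A : Matrix (Fin d) (Fin d) ℝ) : Aᴴ = Aᵀ := by
  ext i j; simp [conjTranspose_apply]

lemma vmv_transpose (a b : Fin d → ℝ) : (vecMulVec a b)ᵀ = vecMulVec b a := by
  ext i j; simp [vecMulVec_apply, mul_comm]

lemma mul_vmv (M : Matrix (Fin d) (Fin d) ℝ) (a b : Fin d → ℝ) :
    M * vecMulVec a b = vecMulVec (M *ᵥ a) b := by
  ext i j
  simp only [Matrix.mul_apply, vecMulVec_apply, Matrix.mulVec, dotProduct, Finset.sum_mul]
  exact Finset.sum_congr rfl fun k _ => by ring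

lemma vmv_mul (M : Matrix (Fin d) (Fin d) ℝ) (a b : Fin d → ℝ) :
    vecMulVec a b * M = vecMulVec a (Mᵀ *ᵥ b) := by
  ext i j
  simp only [Matrix.mul_apply, vecMulVec_apply, Matrix.mulVec, dotProduct,
    Finset.mul_sum, transpose_apply]
  exact Finset.sum_congr rfl fun k _ => by ring

lemma vmv_mul_vmv (a b c e : Fin d → ℝ) :
    vecMulVec a b * vecMulVec c e = (b ⬝ᵥ c) • vecMulVec a e := by
  ext i j
  simp only [Matrix.mul_apply, vecMulVec_apply, Matrix.smul_apply, dotProduct,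
    Finset.sum_mul, smul_eq_mul]
  exact Finset.sum_congr rfl fun k _ => by ring

lemma vmv_mulVec (a b z : Fin d → ℝ) : vecMulVec a b *ᵥ z = (b ⬝ᵥ z) • a := by
  ext i
  simp only [Matrix.mulVec, dotProduct, vecMulVec_apply, Pi.smul_apply, smul_eq_mul,
    Finset.sum_mul]
  exact Finset.sum_congr rfl fun k _ => by ring

lemma psd_vmv (a : Fin d → ℝ) : (vecMulVec a a).PosSemidef := by
  refine PosSemidef.of_dotProduct_mulVec_nonneg ?_ fun z => ?_
  · show (vecMulVec a a)ᴴ = _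
    rw [conjT_eq, vmv_transpose]
  · rw [vmv_mulVec, dotProduct_smul]
    simp only [star_trivial, smul_eq_mul]
    rw [dotProduct_comm]
    exact mul_self_nonneg _

lemma psd_smul {A : Matrix (Fin d) (Fin d) ℝ} (hA : A.PosSemidef) {c : ℝ} (hc : 0 ≤ c) :
    (c • A).PosSemidef := by
  refine PosSemidef.of_dotProduct_mulVec_nonneg ?_ fun z => ?_
  · have := hA.1
    rw [IsHermitian, conjT_eq] at this ⊢
    rw [transpose_smul, this]
  · rw [smul_mulVec, dotProduct_smul]
    exact mul_nonneg hc (hA.dotProduct_mulVec_nonneg z)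

lemma norm_symm_sq (w : Fin d → ℝ) :
    ‖(WithLp.equiv 2 (Fin d → ℝ)).symm w‖ ^ 2 = w ⬝ᵥ w := by
  rw [EuclideanSpace.norm_eq, Real.sq_sqrt (by positivity)]
  simp [dotProduct, sq, Real.norm_eq_abs, abs_mul_abs_self]

lemma norm_le_of_psd {A : Matrix (Fin d) (Fin d) ℝ} {c : ℝ} (hA : A.PosSemidef)
    (hc : 0 ≤ c) (h : (c • (1 : Matrix (Fin d) (Fin d) ℝ) - A).PosSemidef) : ‖A‖ ≤ c := by
  set B := hA.sqrt with hBdef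
  have hB := hA.posSemidef_sqrt
  have hBB : B * B = A := hA.sqrt_mul_self
  have hBt : Bᵀ = B := by rw [← conjT_eq, hB.1]
  have key : ∀ z : Fin d → ℝ, (B *ᵥ z) ⬝ᵥ (B *ᵥ z) ≤ c * (z ⬝ᵥ z) := by
    intro z
    have h0 := h.dotProduct_mulVec_nonneg z
    simp only [star_trivial, sub_mulVec, smul_mulVec, one_mulVec, dotProduct_sub,
      dotProduct_smul, smul_eq_mul] at h0
    have e1 : (B *ᵥ z) ⬝ᵥ (B *ᵥ z) = z ⬝ᵥ (A *ᵥ z) := by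
      rw [← hBB, ← mulVec_mulVec, dotProduct_mulVec z, ← hBt, vecMul_transpose, hBt]
    rw [e1]; linarith
  have hsn : ‖B‖ ≤ Real.sqrt c := by
    rw [l2_opNorm_def]
    refine ContinuousLinearMap.opNorm_le_bound _ (Real.sqrt_nonneg c) fun z => ?_
    have happ : (toEuclideanLin.trans LinearMap.toContinuousLinearMap B) z =
        (WithLp.equiv 2 (Fin d → ℝ)).symm (B *ᵥ (WithLp.equiv 2 (Fin d → ℝ)) z) := rfl
    rw [happ]
    set z' : Fin d → ℝ := (WithLp.equiv 2 (Fin d → ℝ)) z with hz'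
    have hz : ‖z‖ ^ 2 = z' ⬝ᵥ z' := by
      rw [← norm_symm_sq z', hz', Equiv.symm_apply_apply]
    have hsq : ‖(WithLp.equiv 2 (Fin d → ℝ)).symm (B *ᵥ z')‖ ^ 2 ≤ (Real.sqrt c * ‖z‖) ^ 2 := by
      rw [norm_symm_sq, mul_pow, Real.sq_sqrt hc, hz]
      exact key z'
    calc ‖(WithLp.equiv 2 (Fin d → ℝ)).symm (B *ᵥ z')‖
        = Real.sqrt (‖(WithLp.equiv 2 (Fin d → ℝ)).symm (B *ᵥ z')‖ ^ 2) := by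
          rw [Real.sqrt_sq (norm_nonneg _)]
      _ ≤ Real.sqrt ((Real.sqrt c * ‖z‖) ^ 2) := Real.sqrt_le_sqrt hsq
      _ = Real.sqrt c * ‖z‖ := Real.sqrt_sq (by positivity)
  calc ‖A‖ = ‖Bᴴ * B‖ := by rw [conjT_eq, hBt, hBB]
    _ = ‖B‖ * ‖B‖ := l2_opNorm_conjTranspose_mul_self _
    _ ≤ Real.sqrt c * Real.sqrt c :=
        mul_le_mul hsn hsn (norm_nonneg _) (Real.sqrt_nonneg c)
    _ = c := Real.mul_self_sqrt hc

noncomputable def mulLCLM (A : Matrix (Fin d) (Fin d) ℝ) :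
    Matrix (Fin d) (Fin d) ℝ →L[ℝ] Matrix (Fin d) (Fin d) ℝ :=
  LinearMap.toContinuousLinearMap (LinearMap.mulLeft ℝ A)

noncomputable def mulRCLM (B : Matrix (Fin d) (Fin d) ℝ) :
    Matrix (Fin d) (Fin d) ℝ →L[ℝ] Matrix (Fin d) (Fin d) ℝ :=
  LinearMap.toContinuousLinearMap (LinearMap.mulRight ℝ B)

lemma integrable_mulL (A : Matrix (Fin d) (Fin d) ℝ) {F : Ω → Matrix (Fin d) (Fin d) ℝ}
    (hF : Integrable F μ) : Integrable (fun ω => A * F ω) μ :=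
  (mulLCLM A).integrable_comp hF

lemma integrable_mulR (B : Matrix (Fin d) (Fin d) ℝ) {F : Ω → Matrix (Fin d) (Fin d) ℝ}
    (hF : Integrable F μ) : Integrable (fun ω => F ω * B) μ :=
  (mulRCLM B).integrable_comp hF

lemma integral_mulL (A : Matrix (Fin d) (Fin d) ℝ) {F : Ω → Matrix (Fin d) (Fin d) ℝ}
    (hF : Integrable F μ) : ∫ ω, A * F ω ∂μ = A * ∫ ω, F ω ∂μ := by
  have := (mulLCLM A).integral_comp_comm hF
  simpa [mulLCLM] using this

lemma integral_mulR (B : Matrix (Fin d) (Fin d) ℝ) {F : Ω → Matrix (Fin d) (Fin d) ℝ}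
    (hF : Integrable F μ) : ∫ ω, F ω * B ∂μ = (∫ ω, F ω ∂μ) * B := by
  have := (mulRCLM B).integral_comp_comm hF
  simpa [mulRCLM] using this

lemma integrable_mulLR (A B : Matrix (Fin d) (Fin d) ℝ) {F : Ω → Matrix (Fin d) (Fin d) ℝ}
    (hF : Integrable F μ) : Integrable (fun ω => A * F ω * B) μ :=
  integrable_mulR B (integrable_mulL A hF)

lemma integral_mulLR (A B : Matrix (Fin d) (Fin d) ℝ) {F : Ω → Matrix (Fin d) (Fin d) ℝ}
    (hF : Integrable F μ) : ∫ ω, A * F ω * B ∂μ = A * (∫ ω, F ω ∂μ) * B := by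
  rw [integral_mulR B (integrable_mulL A hF), integral_mulL A hF]

noncomputable def transCLM : Matrix (Fin d) (Fin d) ℝ →L[ℝ] Matrix (Fin d) (Fin d) ℝ :=
  LinearMap.toContinuousLinearMap (Matrix.transposeLinearEquiv (Fin d) (Fin d) ℝ ℝ).toLinearMap

lemma integrable_transpose {F : Ω → Matrix (Fin d) (Fin d) ℝ} (hF : Integrable F μ) :
    Integrable (fun ω => (F ω)ᵀ) μ :=
  (transCLM (d := d)).integrable_comp hF

lemma integral_transpose {F : Ω → Matrix (Fin d) (Fin d) ℝ} (hF : Integrable F μ) :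
    ∫ ω, (F ω)ᵀ ∂μ = (∫ ω, F ω ∂μ)ᵀ := by
  have := (transCLM (d := d)).integral_comp_comm hF
  simpa [transCLM, Matrix.transposeLinearEquiv] using this

noncomputable def quadCLM (z : Fin d → ℝ) : Matrix (Fin d) (Fin d) ℝ →L[ℝ] ℝ :=
  LinearMap.toContinuousLinearMap
    { toFun := fun A => z ⬝ᵥ (A *ᵥ z)
      map_add' := fun A B => by simp only [add_mulVec, dotProduct_add]
      map_smul' := fun c A => by simp only [smul_mulVec, dotProduct_smul,
        RingHom.id_apply, smul_eq_mul] }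

lemma integral_posSemidef {F : Ω → Matrix (Fin d) (Fin d) ℝ} (hF : Integrable F μ)
    (h : ∀ᵐ ω ∂μ, (F ω).PosSemidef) : (∫ ω, F ω ∂μ).PosSemidef := by
  refine PosSemidef.of_dotProduct_mulVec_nonneg ?_ ?_
  · show (∫ ω, F ω ∂μ)ᴴ = _
    rw [conjT_eq]
    have h1 : (∫ ω, F ω ∂μ)ᵀ = ∫ ω, (F ω)ᵀ ∂μ := (integral_transpose hF).symm
    rw [h1]
    exact integral_congr_ae (h.mono fun ω hω => by show (F ω)ᵀ = F ω; rw [← conjT_eq, hω.1])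
  · intro zz
    have hst : star zz = zz := by simp
    rw [hst]
    have h1 : quadCLM zz (∫ ω, F ω ∂μ) = ∫ ω, quadCLM zz (F ω) ∂μ :=
      ((quadCLM zz).integral_comp_comm hF).symm
    rw [show zz ⬝ᵥ ((∫ ω, F ω ∂μ) *ᵥ zz) = quadCLM zz (∫ ω, F ω ∂μ) from rfl, h1]
    refine integral_nonneg_of_ae (h.mono fun ω hω => ?_)
    have := hω.dotProduct_mulVec_nonneg zz
    exact (by simpa using this : 0 ≤ zz ⬝ᵥ (F ω *ᵥ zz))

lemma meas_dot (A : Matrix (Fin d) (Fin d) ℝ) {f : Ω → Fin d → ℝ} (hf : Measurable f) :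
    Measurable fun ω => (A *ᵥ f ω) ⬝ᵥ (A *ᵥ f ω) := by
  simp only [Matrix.mulVec, dotProduct]
  exact Finset.measurable_sum _ fun i _ =>
    (Finset.measurable_sum _ fun j _ =>
      (measurable_const.mul ((measurable_pi_apply j).comp hf))).mul
    (Finset.measurable_sum _ fun j _ =>
      (measurable_const.mul ((measurable_pi_apply j).comp hf)))

end Stmt19

open Stmt19 Filter

/-- Variance bounds for the whitened cross-covariance estimator (Appendix A.5,
"Bounding σ²_cr"): with almost-sure leverage bounds `ρs`, `ρs'` and
distribution-shift coefficient `C`, the centered whitened outer product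
`Sf = Σ_cov^{-1/2}(x yᵀ − Σ_cr)Σ_cov^{-1/2}` satisfies
`‖𝔼[Sf·Sfᵀ]‖ ≤ ρs'²` and `‖𝔼[Sfᵀ·Sf]‖ ≤ ρs²·C`. -/
theorem stmt_19 {Ω : Type*} [MeasurableSpace Ω] (Pr : Measure Ω) [IsProbabilityMeasure Pr]
    (d : ℕ) (x y : Ω → Fin d → ℝ) (hx : Measurable x) (hy : Measurable y)
    (hxx : Integrable (fun ω => vecMulVec (x ω) (x ω)) Pr)
    (hxy : Integrable (fun ω => vecMulVec (x ω) (y ω)) Pr)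
    (hyy : Integrable (fun ω => vecMulVec (y ω) (y ω)) Pr)
    (Scov Scr Snext : Matrix (Fin d) (Fin d) ℝ)
    (hScov : Scov = ∫ ω, vecMulVec (x ω) (x ω) ∂Pr)
    (hScr : Scr = ∫ ω, vecMulVec (x ω) (y ω) ∂Pr)
    (hSnext : Snext = ∫ ω, vecMulVec (y ω) (y ω) ∂Pr)
    (hcov : Scov.PosDef)
    (ρs ρs' : ℝ)
    (hρs : ∀ᵐ ω ∂Pr,
      ‖(WithLp.equiv 2 (Fin d → ℝ)).symm (hcov.posSemidef.sqrt⁻¹ *ᵥ x ω)‖ ≤ ρs)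
    (hρs' : ∀ᵐ ω ∂Pr,
      ‖(WithLp.equiv 2 (Fin d → ℝ)).symm (hcov.posSemidef.sqrt⁻¹ *ᵥ y ω)‖ ≤ ρs')
    (C : ℝ) (hC : 0 ≤ C) (hshift : (C • Scov - Snext).PosSemidef)
    (Sf : Ω → Matrix (Fin d) (Fin d) ℝ)
    (hSf : ∀ ω, Sf ω =
      hcov.posSemidef.sqrt⁻¹ * (vecMulVec (x ω) (y ω) - Scr) * hcov.posSemidef.sqrt⁻¹) :
    ‖∫ ω, Sf ω * (Sf ω)ᵀ ∂Pr‖ ≤ ρs' ^ 2 ∧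
      ‖∫ ω, (Sf ω)ᵀ * Sf ω ∂Pr‖ ≤ ρs ^ 2 * C := by
  classical
  set Q : Matrix (Fin d) (Fin d) ℝ := hcov.posSemidef.sqrt with hQdef
  have hQpsd : Q.PosSemidef := hcov.posSemidef.posSemidef_sqrt
  have hQQ : Q * Q = Scov := hcov.posSemidef.sqrt_mul_self
  have hdet : IsUnit Q.det := by
    have h1 : Q.det * Q.det = Scov.det := by rw [← det_mul, hQQ]
    have h2 : Scov.det ≠ 0 := ne_of_gt hcov.det_pos
    exact isUnit_iff_ne_zero.mpr fun h => h2 (by rw [← h1, h, mul_zero])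
  set W : Matrix (Fin d) (Fin d) ℝ := Q⁻¹ with hWdef
  have hWQ : W * Q = 1 := nonsing_inv_mul Q hdet
  have hQW : Q * W = 1 := mul_nonsing_inv Q hdet
  have hWt : Wᵀ = W := by
    rw [hWdef, transpose_nonsing_inv]
    congr 1
    rw [← conjT_eq, hQpsd.1]
  have hWSW : W * Scov * W = 1 := by
    rw [← hQQ, ← Matrix.mul_assoc W Q Q, hWQ, one_mul, hQW]
  set M : Matrix (Fin d) (Fin d) ℝ := W * Scr * W with hMdef
  have keyxy : ∀ ω, W * vecMulVec (x ω) (y ω) * W = vecMulVec (W *ᵥ x ω) (W *ᵥ y ω) := by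
    intro ω; rw [mul_vmv, vmv_mul, hWt]
  have keyxx : ∀ ω, W * vecMulVec (x ω) (x ω) * W = vecMulVec (W *ᵥ x ω) (W *ᵥ x ω) := by
    intro ω; rw [mul_vmv, vmv_mul, hWt]
  have keyyy : ∀ ω, W * vecMulVec (y ω) (y ω) * W = vecMulVec (W *ᵥ y ω) (W *ᵥ y ω) := by
    intro ω; rw [mul_vmv, vmv_mul, hWt]
  have hPint : Integrable (fun ω => vecMulVec (W *ᵥ x ω) (W *ᵥ y ω)) Pr :=
    (integrable_mulLR W W hxy).congr (Eventually.of_forall keyxy)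
  have hUint : Integrable (fun ω => vecMulVec (W *ᵥ x ω) (W *ᵥ x ω)) Pr :=
    (integrable_mulLR W W hxx).congr (Eventually.of_forall keyxx)
  have hVint : Integrable (fun ω => vecMulVec (W *ᵥ y ω) (W *ᵥ y ω)) Pr :=
    (integrable_mulLR W W hyy).congr (Eventually.of_forall keyyy)
  have hPval : ∫ ω, vecMulVec (W *ᵥ x ω) (W *ᵥ y ω) ∂Pr = M := by
    rw [integral_congr_ae (Eventually.of_forall fun ω => (keyxy ω).symm),
      integral_mulLR W W hxy, ← hScr, hMdef]
  have hUval : ∫ ω, vecMulVec (W *ᵥ x ω) (W *ᵥ x ω) ∂Pr = 1 := by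
    rw [integral_congr_ae (Eventually.of_forall fun ω => (keyxx ω).symm),
      integral_mulLR W W hxx, ← hScov, hWSW]
  have hVval : ∫ ω, vecMulVec (W *ᵥ y ω) (W *ᵥ y ω) ∂Pr = W * Snext * W := by
    rw [integral_congr_ae (Eventually.of_forall fun ω => (keyyy ω).symm),
      integral_mulLR W W hyy, ← hSnext]
  have hvv_nonneg : ∀ ω, 0 ≤ (W *ᵥ y ω) ⬝ᵥ (W *ᵥ y ω) := fun ω => by
    rw [← norm_symm_sq]; positivity
  have huu_nonneg : ∀ ω, 0 ≤ (W *ᵥ x ω) ⬝ᵥ (W *ᵥ x ω) := fun ω => by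
    rw [← norm_symm_sq]; positivity
  have hvv_le : ∀ᵐ ω ∂Pr, (W *ᵥ y ω) ⬝ᵥ (W *ᵥ y ω) ≤ ρs' ^ 2 := by
    filter_upwards [hρs'] with ω hω
    rw [← norm_symm_sq]
    exact pow_le_pow_left₀ (norm_nonneg _) hω 2
  have huu_le : ∀ᵐ ω ∂Pr, (W *ᵥ x ω) ⬝ᵥ (W *ᵥ x ω) ≤ ρs ^ 2 := by
    filter_upwards [hρs] with ω hω
    rw [← norm_symm_sq]
    exact pow_le_pow_left₀ (norm_nonneg _) hω 2
  have hvvMem : MemLp (fun ω => (W *ᵥ y ω) ⬝ᵥ (W *ᵥ y ω)) ⊤ Pr :=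
    memLp_top_of_bound (meas_dot W hy).aestronglyMeasurable (ρs' ^ 2)
      (by filter_upwards [hvv_le] with ω h
          rw [Real.norm_eq_abs, abs_of_nonneg (hvv_nonneg ω)]; exact h)
  have huuMem : MemLp (fun ω => (W *ᵥ x ω) ⬝ᵥ (W *ᵥ x ω)) ⊤ Pr :=
    memLp_top_of_bound (meas_dot W hx).aestronglyMeasurable (ρs ^ 2)
      (by filter_upwards [huu_le] with ω h
          rw [Real.norm_eq_abs, abs_of_nonneg (huu_nonneg ω)]; exact h)
  have hPPint : Integrable
      (fun ω => ((W *ᵥ y ω) ⬝ᵥ (W *ᵥ y ω)) • vecMulVec (W *ᵥ x ω) (W *ᵥ x ω)) Pr :=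
    hUint.smul_of_top_right hvvMem
  have hQQint : Integrable
      (fun ω => ((W *ᵥ x ω) ⬝ᵥ (W *ᵥ x ω)) • vecMulVec (W *ᵥ y ω) (W *ᵥ y ω)) Pr :=
    hVint.smul_of_top_right huuMem
  have hSf' : ∀ ω, Sf ω = vecMulVec (W *ᵥ x ω) (W *ᵥ y ω) - M := by
    intro ω
    rw [hSf ω, Matrix.mul_sub, Matrix.sub_mul, keyxy ω, ← hMdef]
  have hSfT : ∀ ω, (Sf ω)ᵀ = vecMulVec (W *ᵥ y ω) (W *ᵥ x ω) - Mᵀ := by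
    intro ω; rw [hSf' ω, transpose_sub, vmv_transpose]
  have hexp1 : ∀ ω, Sf ω * (Sf ω)ᵀ =
      ((W *ᵥ y ω) ⬝ᵥ (W *ᵥ y ω)) • vecMulVec (W *ᵥ x ω) (W *ᵥ x ω)
        - vecMulVec (W *ᵥ x ω) (W *ᵥ y ω) * Mᵀ
        - (M * vecMulVec (W *ᵥ y ω) (W *ᵥ x ω) - M * Mᵀ) := by
    intro ω
    rw [hSfT ω, hSf' ω, Matrix.sub_mul, Matrix.mul_sub, Matrix.mul_sub, vmv_mul_vmv]
  have hexp2 : ∀ ω, (Sf ω)ᵀ * Sf ω =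
      ((W *ᵥ x ω) ⬝ᵥ (W *ᵥ x ω)) • vecMulVec (W *ᵥ y ω) (W *ᵥ y ω)
        - vecMulVec (W *ᵥ y ω) (W *ᵥ x ω) * M
        - (Mᵀ * vecMulVec (W *ᵥ x ω) (W *ᵥ y ω) - Mᵀ * M) := by
    intro ω
    rw [hSfT ω, hSf' ω, Matrix.sub_mul, Matrix.mul_sub, Matrix.mul_sub, vmv_mul_vmv]
  have hPMt : Integrable (fun ω => vecMulVec (W *ᵥ x ω) (W *ᵥ y ω) * Mᵀ) Pr :=
    integrable_mulR Mᵀ hPint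
  have hPTint : Integrable (fun ω => vecMulVec (W *ᵥ y ω) (W *ᵥ x ω)) Pr :=
    (integrable_transpose hPint).congr (Eventually.of_forall fun ω => vmv_transpose _ _)
  have hPTval : ∫ ω, vecMulVec (W *ᵥ y ω) (W *ᵥ x ω) ∂Pr = Mᵀ := by
    rw [integral_congr_ae
        (Eventually.of_forall fun ω => (vmv_transpose (W *ᵥ x ω) (W *ᵥ y ω)).symm),
      integral_transpose hPint, hPval]
  have hMPT : Integrable (fun ω => M * vecMulVec (W *ᵥ y ω) (W *ᵥ x ω)) Pr :=
    integrable_mulL M hPTint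
  have hMtP : Integrable (fun ω => Mᵀ * vecMulVec (W *ᵥ x ω) (W *ᵥ y ω)) Pr :=
    integrable_mulL Mᵀ hPint
  have hPM : Integrable (fun ω => vecMulVec (W *ᵥ y ω) (W *ᵥ x ω) * M) Pr :=
    integrable_mulR M hPTint
  have hSS1int : Integrable (fun ω => Sf ω * (Sf ω)ᵀ) Pr :=
    ((hPPint.sub hPMt).sub (hMPT.sub (integrable_const (M * Mᵀ)))).congr
      (Eventually.of_forall fun ω => (hexp1 ω).symm)
  have hSS2int : Integrable (fun ω => (Sf ω)ᵀ * Sf ω) Pr :=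
    ((hQQint.sub hPM).sub (hMtP.sub (integrable_const (Mᵀ * M)))).congr
      (Eventually.of_forall fun ω => (hexp2 ω).symm)
  have hSS1val : ∫ ω, Sf ω * (Sf ω)ᵀ ∂Pr
      = (∫ ω, ((W *ᵥ y ω) ⬝ᵥ (W *ᵥ y ω)) • vecMulVec (W *ᵥ x ω) (W *ᵥ x ω) ∂Pr)
        - M * Mᵀ := by
    have i1 : Integrable (fun ω => (W *ᵥ y ω ⬝ᵥ W *ᵥ y ω) • vecMulVec (W *ᵥ x ω) (W *ᵥ x ω)
        - vecMulVec (W *ᵥ x ω) (W *ᵥ y ω) * Mᵀ) Pr := hPPint.sub hPMt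
    have i2 : Integrable (fun ω => M * vecMulVec (W *ᵥ y ω) (W *ᵥ x ω) - M * Mᵀ) Pr :=
      hMPT.sub (integrable_const _)
    rw [integral_congr_ae (Eventually.of_forall hexp1),
      integral_sub i1 i2,
      integral_sub hPPint hPMt,
      integral_sub hMPT (integrable_const _),
      integral_mulR Mᵀ hPint, hPval,
      integral_mulL M hPTint, hPTval, integral_const]
    simp only [measure_univ, ENNReal.toReal_one, one_smul, probReal_univ]
    abel
  have hSS2val : ∫ ω, (Sf ω)ᵀ * Sf ω ∂Pr
      = (∫ ω, ((W *ᵥ x ω) ⬝ᵥ (W *ᵥ x ω)) • vecMulVec (W *ᵥ y ω) (W *ᵥ y ω) ∂Pr)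
        - Mᵀ * M := by
    have i1 : Integrable (fun ω => (W *ᵥ x ω ⬝ᵥ W *ᵥ x ω) • vecMulVec (W *ᵥ y ω) (W *ᵥ y ω)
        - vecMulVec (W *ᵥ y ω) (W *ᵥ x ω) * M) Pr := hQQint.sub hPM
    have i2 : Integrable (fun ω => Mᵀ * vecMulVec (W *ᵥ x ω) (W *ᵥ y ω) - Mᵀ * M) Pr :=
      hMtP.sub (integrable_const _)
    rw [integral_congr_ae (Eventually.of_forall hexp2),
      integral_sub i1 i2,
      integral_sub hQQint hPM,
      integral_sub hMtP (integrable_const _),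
      integral_mulR M hPTint, hPTval,
      integral_mulL Mᵀ hPint, hPval, integral_const]
    simp only [measure_univ, ENNReal.toReal_one, one_smul, probReal_univ]
    abel
  have hpos1 : (∫ ω, Sf ω * (Sf ω)ᵀ ∂Pr).PosSemidef :=
    integral_posSemidef hSS1int (Eventually.of_forall fun ω => by
      rw [← conjT_eq]; exact posSemidef_self_mul_conjTranspose _)
  have hpos2 : (∫ ω, (Sf ω)ᵀ * Sf ω ∂Pr).PosSemidef :=
    integral_posSemidef hSS2int (Eventually.of_forall fun ω => by
      rw [← conjT_eq]; exact posSemidef_conjTranspose_mul_self _)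
  have hcent1 : Integrable
      (fun ω => (ρs' ^ 2 - (W *ᵥ y ω) ⬝ᵥ (W *ᵥ y ω)) • vecMulVec (W *ᵥ x ω) (W *ᵥ x ω)) Pr :=
    ((hUint.smul (ρs' ^ 2)).sub hPPint).congr
      (Eventually.of_forall fun ω => by
        simp only [Pi.sub_apply, Pi.smul_apply]
        rw [← sub_smul])
  have hcent2 : Integrable
      (fun ω => (ρs ^ 2 - (W *ᵥ x ω) ⬝ᵥ (W *ᵥ x ω)) • vecMulVec (W *ᵥ y ω) (W *ᵥ y ω)) Pr :=
    ((hVint.smul (ρs ^ 2)).sub hQQint).congr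
      (Eventually.of_forall fun ω => by
        simp only [Pi.sub_apply, Pi.smul_apply]
        rw [← sub_smul])
  have hval1 : ∫ ω, (ρs' ^ 2 - (W *ᵥ y ω) ⬝ᵥ (W *ᵥ y ω)) • vecMulVec (W *ᵥ x ω) (W *ᵥ x ω) ∂Pr
      = ρs' ^ 2 • (1 : Matrix (Fin d) (Fin d) ℝ)
        - ∫ ω, ((W *ᵥ y ω) ⬝ᵥ (W *ᵥ y ω)) • vecMulVec (W *ᵥ x ω) (W *ᵥ x ω) ∂Pr := by
    rw [integral_congr_ae (Eventually.of_forall fun ω =>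
        (sub_smul (ρs' ^ 2) ((W *ᵥ y ω) ⬝ᵥ (W *ᵥ y ω)) (vecMulVec (W *ᵥ x ω) (W *ᵥ x ω)))),
      integral_sub (by exact hUint.smul (ρs' ^ 2) :
        Integrable (fun ω => ρs' ^ 2 • vecMulVec (W *ᵥ x ω) (W *ᵥ x ω)) Pr) hPPint,
      integral_smul, hUval]
  have hval2 : ∫ ω, (ρs ^ 2 - (W *ᵥ x ω) ⬝ᵥ (W *ᵥ x ω)) • vecMulVec (W *ᵥ y ω) (W *ᵥ y ω) ∂Pr
      = ρs ^ 2 • (W * Snext * W)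
        - ∫ ω, ((W *ᵥ x ω) ⬝ᵥ (W *ᵥ x ω)) • vecMulVec (W *ᵥ y ω) (W *ᵥ y ω) ∂Pr := by
    rw [integral_congr_ae (Eventually.of_forall fun ω =>
        (sub_smul (ρs ^ 2) ((W *ᵥ x ω) ⬝ᵥ (W *ᵥ x ω)) (vecMulVec (W *ᵥ y ω) (W *ᵥ y ω)))),
      integral_sub (by exact hVint.smul (ρs ^ 2) :
        Integrable (fun ω => ρs ^ 2 • vecMulVec (W *ᵥ y ω) (W *ᵥ y ω)) Pr) hQQint,
      integral_smul, hVval]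
  have hpsd1' : (∫ ω, (ρs' ^ 2 - (W *ᵥ y ω) ⬝ᵥ (W *ᵥ y ω)) •
      vecMulVec (W *ᵥ x ω) (W *ᵥ x ω) ∂Pr).PosSemidef :=
    integral_posSemidef hcent1 (by
      filter_upwards [hvv_le] with ω h
      exact psd_smul (psd_vmv _) (by linarith))
  have hpsd2' : (∫ ω, (ρs ^ 2 - (W *ᵥ x ω) ⬝ᵥ (W *ᵥ x ω)) •
      vecMulVec (W *ᵥ y ω) (W *ᵥ y ω) ∂Pr).PosSemidef :=
    integral_posSemidef hcent2 (by
      filter_upwards [huu_le] with ω h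
      exact psd_smul (psd_vmv _) (by linarith))
  constructor
  · refine norm_le_of_psd hpos1 (sq_nonneg ρs') ?_
    rw [hSS1val]
    have e : ρs' ^ 2 • (1 : Matrix (Fin d) (Fin d) ℝ)
        - ((∫ ω, ((W *ᵥ y ω) ⬝ᵥ (W *ᵥ y ω)) • vecMulVec (W *ᵥ x ω) (W *ᵥ x ω) ∂Pr) - M * Mᵀ)
        = (ρs' ^ 2 • (1 : Matrix (Fin d) (Fin d) ℝ)
            - ∫ ω, ((W *ᵥ y ω) ⬝ᵥ (W *ᵥ y ω)) • vecMulVec (W *ᵥ x ω) (W *ᵥ x ω) ∂Pr)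
          + M * Mᵀ := by abel
    rw [e, ← hval1]
    exact hpsd1'.add (by rw [← conjT_eq]; exact posSemidef_self_mul_conjTranspose M)
  · refine norm_le_of_psd hpos2 (mul_nonneg (sq_nonneg ρs) hC) ?_
    rw [hSS2val]
    have shift : (W * (C • Scov - Snext) * W).PosSemidef := by
      have := hshift.mul_mul_conjTranspose_same W
      rwa [conjT_eq, hWt] at this
    have expand : W * (C • Scov - Snext) * W
        = C • (1 : Matrix (Fin d) (Fin d) ℝ) - W * Snext * W := by
      rw [Matrix.mul_sub, Matrix.sub_mul, Matrix.mul_smul, Matrix.smul_mul, hWSW]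
    have e2 : (ρs ^ 2 * C) • (1 : Matrix (Fin d) (Fin d) ℝ)
        - ((∫ ω, ((W *ᵥ x ω) ⬝ᵥ (W *ᵥ x ω)) • vecMulVec (W *ᵥ y ω) (W *ᵥ y ω) ∂Pr) - Mᵀ * M)
        = ((ρs ^ 2 • (W * Snext * W)
            - ∫ ω, ((W *ᵥ x ω) ⬝ᵥ (W *ᵥ x ω)) • vecMulVec (W *ᵥ y ω) (W *ᵥ y ω) ∂Pr)
          + ρs ^ 2 • (W * (C • Scov - Snext) * W)) + Mᵀ * M := by
      rw [expand, smul_sub, smul_smul]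
      abel
    rw [e2, ← hval2]
    exact ((hpsd2'.add (psd_smul shift (sq_nonneg ρs))).add
      (by rw [← conjT_eq]; exact posSemidef_conjTranspose_mul_self M))
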